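/- Let A be a unital C*-algebra and let (α₁, γ₁) and (α₂, γ₂) be two pairs of elements, each satisfying the SU_q(2) relations, such that moreover: α₂ and α₂* commute with each of α₁, γ₁, α₁*, γ₁*; γ₂α₁ = α₁γ₂, γ₂α₁* = α₁*γ₂, γ₂γ₁ = conj(ζ)·γ₁γ₂, γ₂γ₁* = ζ·γ₁*γ₂; and γ₂*α₁ = α₁γ₂*, γ₂*α₁* = α₁*γ₂*, γ₂*γ₁ = ζ·γ₁γ₂*, γ₂*γ₁* = conj(ζ)·γ₁*γ₂*. Define Δα = α₁α₂ − q·γ₁*γ₂ and Δγ = γ₁α₂ + α₁*γ₂. Then for all i, j ∈ {−1, 0, 1}: v_{i,j}(Δα, Δγ) = Σ_{k ∈ {−1,0,1}} v_{i,k}(α₁, γ₁) · v_{k,j}(α₂, γ₂). (Equivalently, the 3×3 matrix V evaluated at (Δα, Δγ) equals the matrix product of V evaluated at (α₁, γ₁) with V evaluated at (α₂, γ₂).) -/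

import Mathlib

open scoped ComplexConjugate

/-- Elements `α`, `γ` of a unital C*-algebra satisfy the SU_q(2) relations. -/
def SUq2Rel {A : Type*} [Ring A] [StarRing A] [Module ℂ A] (q : ℂ) (α γ : A) : Prop :=
  star α * α + star γ * γ = 1 ∧
  α * star α + ((‖q‖ : ℂ) ^ 2) • (star γ * γ) = 1 ∧
  α * γ = conj q • (γ * α) ∧
  γ * star γ = star γ * γ

/-- `ζ = q / conj q`. -/
noncomputable def zetaC (q : ℂ) : ℂ := q / conj q

/-- `ς = |q|²`, as a complex scalar. -/
noncomputable def vsig (q : ℂ) : ℂ := (‖q‖ : ℂ) ^ 2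

/-- `σ² = 1 + |q|²`, as a complex scalar. -/
noncomputable def sigSq (q : ℂ) : ℂ := 1 + vsig q

/-- The matrix elements `v_{i,j}(x, y)`, `i, j ∈ {-1, 0, 1}` (and `0` for other indices). -/
noncomputable def vij {A : Type*} [Ring A] [StarRing A] [Module ℂ A]
    (q : ℂ) (x y : A) (i j : ℤ) : A :=
  if i = -1 then
    if j = -1 then x ^ 2
    else if j = 0 then -(sigSq q • (star y * x))
    else if j = 1 then -(q • star y ^ 2)
    else 0
  else if i = 0 then
    if j = -1 then zetaC q • (x * y)
    else if j = 0 then 1 - sigSq q • (star y * y)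
    else if j = 1 then star y * star x
    else 0
  else if i = 1 then
    if j = -1 then -((q * zetaC q) • y ^ 2)
    else if j = 0 then -(sigSq q • (star x * y))
    else if j = 1 then star x ^ 2
    else 0
  else 0

/-! ### Auxiliary machinery -/

open NormedSpace

section Fuglede

variable {A : Type*} [NormedRing A] [NormedAlgebra ℂ A] [CompleteSpace A]

private lemma semiconj_exp' {M T N : A} (h : M * T = T * N) (z : ℂ) :
    exp (z • M) * T = T * exp (z • N) := by
  have hn : ∀ n : ℕ, (z • M) ^ n * T = T * (z • N) ^ n := by
    intro n
    induction n with
    | zero => simp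
    | succ n ih =>
      rw [pow_succ, pow_succ, mul_assoc, smul_mul_assoc, h, ← mul_smul_comm, ← mul_assoc, ih,
        mul_assoc, mul_smul_comm]
  have h1 : HasSum (fun n : ℕ => (((Nat.factorial n : ℂ))⁻¹ • (z • M) ^ n) * T)
      (exp (z • M) * T) := by
    have he := congrFun (exp_eq_tsum (𝕂 := ℂ) (𝔸 := A)) (z • M)
    have := (expSeries_summable' (𝕂 := ℂ) (z • M)).hasSum
    rw [← he] at this
    exact this.mul_right T
  have h2 : HasSum (fun n : ℕ => (((Nat.factorial n : ℂ))⁻¹ • (z • M) ^ n) * T)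
      (T * exp (z • N)) := by
    have he := congrFun (exp_eq_tsum (𝕂 := ℂ) (𝔸 := A)) (z • N)
    have := (expSeries_summable' (𝕂 := ℂ) (z • N)).hasSum
    rw [← he] at this
    have := this.mul_left T
    convert this using 2 with n
    · rfl
    rw [smul_mul_assoc, hn n, mul_smul_comm]
  exact h1.unique h2

variable [StarRing A] [CStarRing A] [StarModule ℂ A]

private lemma fuglede_putnam' (M N T : A) (hM : M * star M = star M * M)
    (hN : N * star N = star N * N) (h : M * T = T * N) :
    star M * T = T * star N := by
  let _ : NormedAlgebra ℚ A := .restrictScalars ℚ ℂ A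
  rcases subsingleton_or_nontrivial A with hs | hnt
  · exact Subsingleton.elim _ _
  have key : ∀ w : ℂ, exp (w • M) * T = T * exp (w • N) := semiconj_exp' h
  have hinv : ∀ (x : A) (w : ℂ), exp ((-w) • x) * exp (w • x) = 1 := by
    intro x w
    rw [← exp_add_of_commute (((Commute.refl x).smul_left (-w)).smul_right w)]
    simp
  have hTfix : ∀ w : ℂ, T = exp ((-w) • M) * (T * exp (w • N)) := by
    intro w
    rw [← key w, ← mul_assoc, hinv, one_mul]
  set f : ℂ → A := fun z => exp (z • star M) * T * exp ((-z) • star N) with hf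
  have hfeq : ∀ z : ℂ, f z =
      exp (z • star M + (-(conj z)) • M) * T * exp (conj z • N + (-z) • star N) := by
    intro z
    have cM : Commute (star M) M := hM.symm
    have cN : Commute N (star N) := hN
    have hcM : Commute (z • star M) ((-(conj z)) • M) :=
      Commute.smul_left (Commute.smul_right cM (-(conj z))) z
    have hcN : Commute (conj z • N) ((-z) • star N) :=
      Commute.smul_left (Commute.smul_right cN (-z)) (conj z)
    rw [exp_add_of_commute hcM, exp_add_of_commute hcN, hf]
    simp only
    conv_lhs => rw [hTfix (conj z)]
    simp only [mul_assoc]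
  have hskewM : ∀ z : ℂ, (z • star M + (-(conj z)) • M) ∈ skewAdjoint A := by
    intro z
    rw [skewAdjoint.mem_iff]
    simp only [star_add, star_smul, star_star, star_neg, Complex.star_def, Complex.conj_conj,
      neg_add, neg_smul, neg_neg]
    exact add_comm _ _
  have hskewN : ∀ z : ℂ, (conj z • N + (-z) • star N) ∈ skewAdjoint A := by
    intro z
    rw [skewAdjoint.mem_iff]
    simp only [star_add, star_smul, star_star, star_neg, Complex.star_def, Complex.conj_conj,
      neg_add, neg_smul, neg_neg]
    exact add_comm _ _
  have hbound : ∀ z : ℂ, ‖f z‖ = ‖T‖ := by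
    intro z
    rw [hfeq z]
    rw [CStarRing.norm_mul_coe_unitary _ ⟨_, exp_mem_unitary_of_mem_skewAdjoint (hskewN z)⟩,
      CStarRing.norm_coe_unitary_mul ⟨_, exp_mem_unitary_of_mem_skewAdjoint (hskewM z)⟩ T]
  have hdiff : Differentiable ℂ f := by
    apply Differentiable.mul
    · exact (Differentiable.mul_const
        (fun t => (hasDerivAt_exp_smul_const (𝕂 := ℂ) (star M) t).differentiableAt) T)
    · intro t
      have h1 : HasDerivAt (fun u : ℂ => exp (u • star N)) _ (-t) :=
        hasDerivAt_exp_smul_const (𝕂 := ℂ) (star N) (-t)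
      have h2 : HasDerivAt (fun u : ℂ => -u) (-1 : ℂ) t := (hasDerivAt_id t).neg
      exact (HasDerivAt.scomp t h1 h2).differentiableAt
  have hb : Bornology.IsBounded (Set.range f) := by
    rw [Metric.isBounded_iff_subset_closedBall 0]
    refine ⟨‖T‖, ?_⟩
    rintro x ⟨z, rfl⟩
    simp [Metric.mem_closedBall, dist_zero_right, hbound z]
  have hconst : ∀ z : ℂ, f z = T := by
    intro z
    have := hdiff.apply_eq_apply_of_bounded hb z 0
    rw [this, hf]
    simp
  have hsemi : ∀ z : ℂ, exp (z • star M) * T = T * exp (z • star N) := by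
    intro z
    have h0 := hconst z
    rw [hf] at h0
    simp only at h0
    have := congrArg (fun y => y * exp (z • star N)) h0
    rw [mul_assoc, mul_assoc, hinv, mul_one] at this
    exact this
  have hd1 : HasDerivAt (fun z : ℂ => exp (z • star M) * T)
      ((exp ((0 : ℂ) • star M) * star M) * T) 0 :=
    (hasDerivAt_exp_smul_const (𝕂 := ℂ) (star M) 0).mul_const T
  have hd2 : HasDerivAt (fun z : ℂ => T * exp (z • star N))
      (T * (exp ((0 : ℂ) • star N) * star N)) 0 :=
    (hasDerivAt_exp_smul_const (𝕂 := ℂ) (star N) 0).const_mul T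
  have hfun : (fun z : ℂ => exp (z • star M) * T) =
      (fun z : ℂ => T * exp (z • star N)) := funext hsemi
  rw [hfun] at hd1
  have := hd1.unique hd2
  simpa using this

end Fuglede

section Rules

variable {A : Type*} [NormedRing A] [StarRing A] [CStarRing A] [NormedAlgebra ℂ A]
  [StarModule ℂ A] [CompleteSpace A] {q : ℂ} {α γ : A}

private lemma SUq2Rel.rr2 (h : SUq2Rel q α γ) : α * star γ = q • (star γ * α) := by
  have hM : (conj q • γ) * star (conj q • γ) = star (conj q • γ) * (conj q • γ) := by
    rw [star_smul, Complex.star_def, Complex.conj_conj]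
    rw [smul_mul_assoc, mul_smul_comm, smul_mul_assoc, mul_smul_comm, smul_smul, smul_smul,
      h.2.2.2, mul_comm]
  have hcomm : (conj q • γ) * α = α * γ := by
    rw [smul_mul_assoc, ← h.2.2.1]
  have hf := fuglede_putnam' (conj q • γ) γ α hM h.2.2.2 hcomm
  rw [star_smul, Complex.star_def, Complex.conj_conj, smul_mul_assoc] at hf
  exact hf.symm

private lemma SUq2Rel.rr3 (h : SUq2Rel q α γ) : γ * star α = conj q • (star α * γ) := by
  have h2 := congrArg star h.rr2
  rw [star_mul, star_star, star_smul, star_mul, star_star, Complex.star_def] at h2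
  exact h2

private lemma SUq2Rel.rr4 (h : SUq2Rel q α γ) :
    star γ * star α = q • (star α * star γ) := by
  have h2 := congrArg star h.2.2.1
  rw [star_mul, star_smul, star_mul, Complex.star_def, Complex.conj_conj] at h2
  exact h2

private lemma SUq2Rel.rr6 (h : SUq2Rel q α γ) : star α * α = 1 - star γ * γ :=
  eq_sub_of_add_eq h.1

private lemma SUq2Rel.rr7 (h : SUq2Rel q α γ) :
    α * star α = 1 - (q * conj q) • (star γ * γ) := by
  have hvs : ((‖q‖ : ℝ) : ℂ) ^ 2 = q * conj q := by
    rw [← Complex.ofReal_pow, Complex.sq_norm]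
    exact (Complex.mul_conj q).symm
  have := eq_sub_of_add_eq h.2.1
  rwa [hvs] at this

end Rules

private lemma mul_ext' {A : Type*} [Semigroup A] {a b c : A} (h : a * b = c) (x : A) :
    a * (b * x) = c * x := by rw [← mul_assoc, h]

private lemma sum_m101 {M : Type*} [AddCommMonoid M] (f : ℤ → M) :
    ∑ k ∈ ({-1, 0, 1} : Finset ℤ), f k = f (-1) + f 0 + f 1 := by
  show ∑ k ∈ insert (-1) (insert 0 ({1} : Finset ℤ)), f k = _
  rw [Finset.sum_insert (by decide), Finset.sum_insert (by decide), Finset.sum_singleton,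
    ← add_assoc]

section VijEntries

variable {A : Type*} [Ring A] [StarRing A] [Module ℂ A] (q : ℂ) (x y : A)

private lemma vij_m_m : vij q x y (-1) (-1) = x ^ 2 := rfl
private lemma vij_m_0 : vij q x y (-1) 0 = -(sigSq q • (star y * x)) := rfl
private lemma vij_m_1 : vij q x y (-1) 1 = -(q • star y ^ 2) := rfl
private lemma vij_0_m : vij q x y 0 (-1) = zetaC q • (x * y) := rfl
private lemma vij_0_0 : vij q x y 0 0 = 1 - sigSq q • (star y * y) := rfl
private lemma vij_0_1 : vij q x y 0 1 = star y * star x := rfl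
private lemma vij_1_m : vij q x y 1 (-1) = -((q * zetaC q) • y ^ 2) := rfl
private lemma vij_1_0 : vij q x y 1 0 = -(sigSq q • (star x * y)) := rfl
private lemma vij_1_1 : vij q x y 1 1 = star x ^ 2 := rfl

end VijEntries

set_option maxHeartbeats 4000000 in
theorem stmt5 (q : ℂ) (hq0 : 0 < ‖q‖) (hq1 : ‖q‖ < 1)
    {A : Type*} [NormedRing A] [StarRing A] [CStarRing A] [NormedAlgebra ℂ A]
    [StarModule ℂ A] [CompleteSpace A]
    (α₁ γ₁ α₂ γ₂ : A) (h₁ : SUq2Rel q α₁ γ₁) (h₂ : SUq2Rel q α₂ γ₂)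
    -- `α₂` commutes with `α₁, γ₁, α₁*, γ₁*`:
    (hc1 : α₂ * α₁ = α₁ * α₂) (hc2 : α₂ * γ₁ = γ₁ * α₂)
    (hc3 : α₂ * star α₁ = star α₁ * α₂) (hc4 : α₂ * star γ₁ = star γ₁ * α₂)
    -- `α₂*` commutes with `α₁, γ₁, α₁*, γ₁*`:
    (hc5 : star α₂ * α₁ = α₁ * star α₂) (hc6 : star α₂ * γ₁ = γ₁ * star α₂)
    (hc7 : star α₂ * star α₁ = star α₁ * star α₂)
    (hc8 : star α₂ * star γ₁ = star γ₁ * star α₂)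
    -- braided commutation of `γ₂` with the first pair:
    (hc9 : γ₂ * α₁ = α₁ * γ₂) (hc10 : γ₂ * star α₁ = star α₁ * γ₂)
    (hc11 : γ₂ * γ₁ = conj (zetaC q) • (γ₁ * γ₂))
    (hc12 : γ₂ * star γ₁ = zetaC q • (star γ₁ * γ₂))
    -- braided commutation of `γ₂*` with the first pair:
    (hc13 : star γ₂ * α₁ = α₁ * star γ₂) (hc14 : star γ₂ * star α₁ = star α₁ * star γ₂)
    (hc15 : star γ₂ * γ₁ = zetaC q • (γ₁ * star γ₂))
    (hc16 : star γ₂ * star γ₁ = conj (zetaC q) • (star γ₁ * star γ₂)) :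
    ∀ i ∈ ({-1, 0, 1} : Finset ℤ), ∀ j ∈ ({-1, 0, 1} : Finset ℤ),
      vij q (α₁ * α₂ - q • (star γ₁ * γ₂)) (γ₁ * α₂ + star α₁ * γ₂) i j
        = ∑ k ∈ ({-1, 0, 1} : Finset ℤ), vij q α₁ γ₁ i k * vij q α₂ γ₂ k j := by
  have hq : q ≠ 0 := by
    intro h; rw [h] at hq0; simp at hq0
  have hqc : conj q ≠ 0 := fun h => hq (by rw [← Complex.conj_conj q, h, map_zero])
  have hvs : ((‖q‖ : ℝ) : ℂ) ^ 2 = q * conj q := by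
    rw [← Complex.ofReal_pow, Complex.sq_norm]
    exact (Complex.mul_conj q).symm
  have r11 := h₁.2.2.1
  have r12 := h₁.rr2
  have r13 := h₁.rr3
  have r14 := h₁.rr4
  have r15 := h₁.2.2.2
  have r16 := h₁.rr6
  have r17 := h₁.rr7
  have r21 := h₂.2.2.1
  have r22 := h₂.rr2
  have r23 := h₂.rr3
  have r24 := h₂.rr4
  have r25 := h₂.2.2.2
  have r26 := h₂.rr6
  have r27 := h₂.rr7
  intro i hi j hj
  fin_cases hi <;> fin_cases hj <;>
  · simp only [sum_m101, vij_m_m, vij_m_0, vij_m_1, vij_0_m, vij_0_0, vij_0_1, vij_1_m,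
      vij_1_0, vij_1_1]
    simp only [zetaC, sigSq, vsig, hvs, map_div₀, Complex.conj_conj,
      pow_two, star_mul, star_add, star_sub, star_smul, star_star, star_one,
      Complex.star_def, map_mul, map_one,
      smul_add, smul_sub, smul_neg, smul_smul,
      mul_add, add_mul, mul_sub, sub_mul, mul_neg, neg_mul, mul_one, one_mul,
      smul_mul_assoc, mul_smul_comm, mul_assoc,
      r11, r12, r13, r14, r15, r16, r17,
      mul_ext' r11, mul_ext' r12, mul_ext' r13, mul_ext' r14, mul_ext' r15, mul_ext' r16,
      mul_ext' r17,
      r21, r22, r23, r24, r25, r26, r27,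
      mul_ext' r21, mul_ext' r22, mul_ext' r23, mul_ext' r24, mul_ext' r25, mul_ext' r26,
      mul_ext' r27,
      hc1, hc2, hc3, hc4, hc5, hc6, hc7, hc8, hc9, hc10, hc11, hc12, hc13, hc14, hc15, hc16,
      mul_ext' hc1, mul_ext' hc2, mul_ext' hc3, mul_ext' hc4, mul_ext' hc5, mul_ext' hc6,
      mul_ext' hc7, mul_ext' hc8, mul_ext' hc9, mul_ext' hc10, mul_ext' hc11, mul_ext' hc12,
      mul_ext' hc13, mul_ext' hc14, mul_ext' hc15, mul_ext' hc16]
    match_scalars <;> field_simp <;>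
      first
        | ring1
        | exact Or.inl (by ring)
        | exact Or.inl trivial
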